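/- Let f : ℝ^d → ℝ be continuously differentiable with a nonempty set S of global minimizers, ∅ ≠ S̃ ⊆ S, P(·; S̃) nonnegative, and suppose there exist c₁ > 0, c₂ ≥ 0 with ⟨∇f(x), x − proj_{S̃}(x)⟩ ≥ c₁ P(x; S̃) − c₂ for all x. Let (x^k) be iterates x^{k+1} = x^k − γ^k ∇f(x^k) with stepsizes satisfying 0 < γ^k ≤ (2−α)(⟨∇f(x^k), x^k − x^k_p⟩ + c₂ + β^k)/‖∇f(x^k)‖² for all k (0 < α < 2, β^k > 0, x^k_p := proj_{S̃}(x^k)), and additionally γ^k ≤ γ^{k−1} for k = 1, …, K. Then min_{0≤k≤K} P(x^k; S̃) ≤ D²_max/(α c₁ γ^K (K+1)) + (2−α)/(α c₁ (K+1)) Σ_{k=0}^{K} β^k + 2c₂/(α c₁), where D²_max := max_{0≤k≤K} ‖x^k − x^k_p‖². -/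

import Mathlib

open scoped RealInnerProductSpace

lemma abel_bound (γ D : ℕ → ℝ) (hγpos : ∀ k, 0 < γ k) (K : ℕ)
    (hmono : ∀ k, 1 ≤ k → k ≤ K → γ k ≤ γ (k - 1))
    (m : ℝ) (hm : ∀ k ≤ K, D k ≤ m) :
    ∑ k ∈ Finset.range (K + 1), (D k - D (k + 1)) / γ k ≤ (m - D (K + 1)) / γ K := by
  induction K with
  | zero =>
    rw [Finset.sum_range_one]
    gcongr
    · exact (hγpos 0).le
    · exact hm 0 le_rfl
  | succ n ih =>
    rw [Finset.sum_range_succ]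
    have h1 : ∑ k ∈ Finset.range (n + 1), (D k - D (k + 1)) / γ k ≤ (m - D (n + 1)) / γ n :=
      ih (fun k h1 h2 => hmono k h1 (h2.trans (Nat.le_succ n)))
        (fun k hk => hm k (hk.trans (Nat.le_succ n)))
    have hle : γ (n + 1) ≤ γ n := by
      have := hmono (n + 1) (Nat.succ_le_succ (Nat.zero_le n)) le_rfl
      simpa using this
    have h2 : (m - D (n + 1)) / γ n ≤ (m - D (n + 1)) / γ (n + 1) :=
      div_le_div_of_nonneg_left (by linarith [hm (n + 1) le_rfl]) (hγpos (n + 1)) hle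
    have h3 : (m - D (n + 1)) / γ (n + 1) + (D (n + 1) - D (n + 2)) / γ (n + 1)
        = (m - D (n + 2)) / γ (n + 1) := by
      rw [← add_div]; ring_nf
    linarith

/-- Corollary 3: under the unified parametric assumption, gradient descent with
non-increasing stepsizes (up to iteration `K`) satisfies the stated bound on the
minimum of the progress function. -/
theorem decreasing_stepsize_rate
    {d : ℕ} (f : EuclideanSpace ℝ (Fin d) → ℝ)
    (hf : ContDiff ℝ 1 f)
    (S St : Set (EuclideanSpace ℝ (Fin d)))
    (hSne : S.Nonempty)
    (hSmin : ∀ s ∈ S, ∀ y, f s ≤ f y)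
    (hStS : St ⊆ S) (hStne : St.Nonempty)
    (proj : EuclideanSpace ℝ (Fin d) → EuclideanSpace ℝ (Fin d))
    (hproj : ∀ y, proj y ∈ St ∧ ∀ z ∈ St, ‖y - proj y‖ ≤ ‖y - z‖)
    (P : EuclideanSpace ℝ (Fin d) → ℝ) (hP : ∀ y, 0 ≤ P y)
    (c₁ c₂ : ℝ) (hc₁ : 0 < c₁) (hc₂ : 0 ≤ c₂)
    (hass : ∀ y, c₁ * P y - c₂ ≤ ⟪gradient f y, y - proj y⟫)
    (α : ℝ) (hα₁ : 0 < α) (hα₂ : α < 2)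
    (β : ℕ → ℝ) (hβ : ∀ k, 0 < β k)
    (x : ℕ → EuclideanSpace ℝ (Fin d)) (γ : ℕ → ℝ)
    (hupd : ∀ k, x (k + 1) = x k - γ k • gradient f (x k))
    (hγ : ∀ k, 0 < γ k ∧
      γ k ≤ (2 - α) * (⟪gradient f (x k), x k - proj (x k)⟫ + c₂ + β k) /
        ‖gradient f (x k)‖ ^ 2)
    (K : ℕ)
    (hmono : ∀ k, 1 ≤ k → k ≤ K → γ k ≤ γ (k - 1)) :
    (Finset.range (K + 1)).inf' Finset.nonempty_range_add_one (fun k => P (x k)) ≤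
      ((Finset.range (K + 1)).sup' Finset.nonempty_range_add_one
          (fun k => ‖x k - proj (x k)‖ ^ 2)) / (α * c₁ * γ K * (K + 1))
      + (2 - α) / (α * c₁ * (K + 1)) * ∑ k ∈ Finset.range (K + 1), β k
      + 2 * c₂ / (α * c₁) := by
  set D : ℕ → ℝ := fun k => ‖x k - proj (x k)‖ ^ 2 with hD
  set g : ℕ → EuclideanSpace ℝ (Fin d) := fun k => gradient f (x k) with hg
  set t : ℕ → ℝ := fun k => ⟪g k, x k - proj (x k)⟫ with ht
  -- gradient is nonzero at iterates
  have hgpos : ∀ k, (0:ℝ) < ‖g k‖ ^ 2 := by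
    intro k
    rcases hγ k with ⟨h1, h2⟩
    by_contra h
    push_neg at h
    have hz : ‖g k‖ ^ 2 = 0 := le_antisymm h (by positivity)
    rw [hz, div_zero] at h2
    linarith
  have hstep : ∀ k, γ k * ‖g k‖ ^ 2 ≤ (2 - α) * (t k + c₂ + β k) := by
    intro k
    exact (le_div_iff₀ (hgpos k)).1 (hγ k).2
  -- key per-iteration inequality
  have key : ∀ k, α * c₁ * P (x k) ≤ (D k - D (k + 1)) / γ k + (2 - α) * β k + 2 * c₂ := by
    intro k
    have hγp := (hγ k).1
    have hexp : ‖x (k + 1) - proj (x k)‖ ^ 2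
        = D k - 2 * γ k * t k + γ k ^ 2 * ‖g k‖ ^ 2 := by
      rw [hupd k]
      have e1 : x k - γ k • g k - proj (x k) = (x k - proj (x k)) - γ k • g k := by
        abel
      rw [e1, norm_sub_sq_real, real_inner_smul_right, norm_smul, real_inner_comm]
      simp only [Real.norm_eq_abs, mul_pow, sq_abs]
      ring_nf
      simp only [hD, ht]
      ring
    have hDle : D (k + 1) ≤ ‖x (k + 1) - proj (x k)‖ ^ 2 := by
      have := (hproj (x (k + 1))).2 (proj (x k)) (hproj (x k)).1
      exact pow_le_pow_left₀ (norm_nonneg _) this 2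
    have hsq : γ k ^ 2 * ‖g k‖ ^ 2 ≤ γ k * ((2 - α) * (t k + c₂ + β k)) := by
      have := mul_le_mul_of_nonneg_left (hstep k) hγp.le
      calc γ k ^ 2 * ‖g k‖ ^ 2 = γ k * (γ k * ‖g k‖ ^ 2) := by ring
        _ ≤ γ k * ((2 - α) * (t k + c₂ + β k)) := this
    have h5 : (α * t k - (2 - α) * (c₂ + β k)) * γ k ≤ D k - D (k + 1) := by
      nlinarith [hDle, hexp, hsq]
    have h6 : α * t k - (2 - α) * (c₂ + β k) ≤ (D k - D (k + 1)) / γ k :=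
      (le_div_iff₀ hγp).2 h5
    have h7 : α * (c₁ * P (x k) - c₂) ≤ α * t k :=
      mul_le_mul_of_nonneg_left (hass (x k)) hα₁.le
    nlinarith
  -- sup bound
  set m : ℝ := (Finset.range (K + 1)).sup' Finset.nonempty_range_add_one
      (fun k => ‖x k - proj (x k)‖ ^ 2) with hm
  have hmD : ∀ k ≤ K, D k ≤ m :=
    fun k hk => Finset.le_sup' _ (Finset.mem_range.mpr (Nat.lt_succ_of_le hk))
  have habel : ∑ k ∈ Finset.range (K + 1), (D k - D (k + 1)) / γ k ≤ m / γ K := by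
    have h1 := abel_bound γ D (fun k => (hγ k).1) K hmono m hmD
    have h2 : (m - D (K + 1)) / γ K ≤ m / γ K := by
      gcongr
      · exact (hγ K).1.le
      · have : (0:ℝ) ≤ D (K + 1) := by positivity
        linarith
    linarith
  -- inf bound
  set M : ℝ := (Finset.range (K + 1)).inf' Finset.nonempty_range_add_one (fun k => P (x k))
    with hM
  have hMP : (K + 1 : ℝ) * M ≤ ∑ k ∈ Finset.range (K + 1), P (x k) := by
    have h := Finset.card_nsmul_le_sum (Finset.range (K + 1)) (fun k => P (x k)) M
      (fun i hi => Finset.inf'_le _ hi)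
    rw [Finset.card_range] at h
    simpa [nsmul_eq_mul] using h
  have hsum : α * c₁ * ∑ k ∈ Finset.range (K + 1), P (x k)
      ≤ m / γ K + (2 - α) * ∑ k ∈ Finset.range (K + 1), β k + 2 * c₂ * (K + 1) := by
    calc α * c₁ * ∑ k ∈ Finset.range (K + 1), P (x k)
        = ∑ k ∈ Finset.range (K + 1), α * c₁ * P (x k) := by rw [Finset.mul_sum]
      _ ≤ ∑ k ∈ Finset.range (K + 1), ((D k - D (k + 1)) / γ k + (2 - α) * β k + 2 * c₂) :=
          Finset.sum_le_sum (fun k _ => key k)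
      _ = (∑ k ∈ Finset.range (K + 1), (D k - D (k + 1)) / γ k)
          + (2 - α) * (∑ k ∈ Finset.range (K + 1), β k) + 2 * c₂ * (K + 1) := by
          rw [Finset.sum_add_distrib, Finset.sum_add_distrib, Finset.sum_const,
            Finset.card_range, ← Finset.mul_sum]
          push_cast
          ring
      _ ≤ m / γ K + (2 - α) * ∑ k ∈ Finset.range (K + 1), β k + 2 * c₂ * (K + 1) := by
          linarith [habel]
  have hK1 : (0:ℝ) < (K + 1 : ℝ) := by positivity
  have hfin : M ≤ (m / γ K + (2 - α) * ∑ k ∈ Finset.range (K + 1), β k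
      + 2 * c₂ * (K + 1)) / (α * c₁ * (K + 1)) := by
    rw [le_div_iff₀ (by positivity)]
    nlinarith [hMP, hsum, mul_le_mul_of_nonneg_left hMP (mul_pos hα₁ hc₁).le]
  have hγK := (hγ K).1
  calc M ≤ (m / γ K + (2 - α) * ∑ k ∈ Finset.range (K + 1), β k
        + 2 * c₂ * (K + 1)) / (α * c₁ * (K + 1)) := hfin
    _ = m / (α * c₁ * γ K * (K + 1))
        + (2 - α) / (α * c₁ * (K + 1)) * ∑ k ∈ Finset.range (K + 1), β k
        + 2 * c₂ / (α * c₁) := by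
        field_simp
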